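/- For all q, ψ ∈ ℝ^{N²}, qᵀ( D_y((D_x q) ∗ ψ) − D_x((D_y q) ∗ ψ) ) = 0. In particular the semi-discretization J_Z preserves the discrete enstrophy Z(q) = (δ²/2) qᵀq. -/

import Mathlib

open Matrix
open scoped Kronecker

noncomputable section

/-- The `N×N` cyclic shift matrix: `E i j = 1` iff `j ≡ i+1 (mod N)`. -/
def shiftE (N : ℕ) : Matrix (Fin N) (Fin N) ℝ :=
  Matrix.of fun i j => if ((i : ℕ) + 1) % N = (j : ℕ) then 1 else 0

/-- The grid spacing `δ = 2π/N`. -/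
def gridDelta (N : ℕ) : ℝ := 2 * Real.pi / N

/-- The central divided-difference matrix `D = (E - Eᵀ)/(2δ)`. -/
def Dmat (N : ℕ) : Matrix (Fin N) (Fin N) ℝ :=
  (2 * gridDelta N)⁻¹ • (shiftE N - (shiftE N)ᵀ)

/-- `D_x = I ⊗ D`. -/
def Dx (N : ℕ) : Matrix (Fin N × Fin N) (Fin N × Fin N) ℝ :=
  (1 : Matrix (Fin N) (Fin N) ℝ) ⊗ₖ Dmat N

/-- `D_y = D ⊗ I`. -/
def Dy (N : ℕ) : Matrix (Fin N × Fin N) (Fin N × Fin N) ℝ :=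
  Dmat N ⊗ₖ (1 : Matrix (Fin N) (Fin N) ℝ)

/-- `qᵀ( D_y((D_x q) ∗ ψ) − D_x((D_y q) ∗ ψ) ) = 0`, so the `J_Z`
semi-discretization preserves the discrete enstrophy `Z(q) = (δ²/2) qᵀq`. -/
theorem JZ_enstrophy_orthogonal (N : ℕ) (hN : 3 ≤ N)
    (q ψ : Fin N × Fin N → ℝ) :
    q ⬝ᵥ ((Dy N).mulVec ((Dx N).mulVec q * ψ) - (Dx N).mulVec ((Dy N).mulVec q * ψ))
      = 0 := by
  have hD : (Dmat N)ᵀ = -(Dmat N) := by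
    simp [Dmat, transpose_smul, transpose_sub]
    ext i j
    simp [mul_comm]
    ring
  have hD' : ∀ i j, Dmat N i j = -(Dmat N j i) := by
    intro i j
    have := congrFun (congrFun hD j) i
    simpa using this
  have hDx : (Dx N)ᵀ = -(Dx N) := by
    ext ⟨a,b⟩ ⟨c,d⟩
    simp only [Dx, transpose_apply, kroneckerMap_apply, Matrix.neg_apply, Matrix.one_apply]
    rw [hD' d b]
    rcases eq_or_ne c a with h | h
    · subst h; ring
    · simp [h, h.symm]
  have hDy : (Dy N)ᵀ = -(Dy N) := by
    ext ⟨a,b⟩ ⟨c,d⟩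
    simp only [Dy, transpose_apply, kroneckerMap_apply, Matrix.neg_apply, Matrix.one_apply]
    rw [hD' c a]
    rcases eq_or_ne d b with h | h
    · subst h; ring
    · simp [h, h.symm]
  have key : ∀ (M : Matrix (Fin N × Fin N) (Fin N × Fin N) ℝ) (v : Fin N × Fin N → ℝ),
      Mᵀ = -M → q ⬝ᵥ M.mulVec v = -(M.mulVec q ⬝ᵥ v) := by
    intro M v h
    rw [Matrix.dotProduct_mulVec, ← Matrix.mulVec_transpose, h]
    simp [Matrix.neg_mulVec]
  rw [dotProduct_sub, key _ _ hDy, key _ _ hDx]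
  simp only [dotProduct, Pi.mul_apply]
  rw [neg_sub_neg, ← Finset.sum_sub_distrib]
  apply Finset.sum_eq_zero
  intro i _
  ring
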